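/- arXiv:hep-th/0501097 — 2 statements merged into one kernel-verified Lean document; each statement's English description precedes it below -/
import Mathlib

section
/- Let ω be an invertible antisymmetric n×n matrix with inverse W, let N be an n×m matrix with Δ = Nᵀ W N invertible. Then the Dirac bivector D = W − W N Δ⁻¹ Nᵀ W is antisymmetric and has rank exactly n − m. -/
open Matrix

private lemma matrix_neg_inv {K : Type*} [Field K] {k : ℕ}
    (A : Matrix (Fin k) (Fin k) K) (h : IsUnit A.det) : (-A)⁻¹ = -A⁻¹ :=
  Matrix.inv_eq_right_inv (by
    rw [Matrix.neg_mul, Matrix.mul_neg, neg_neg, Matrix.mul_nonsing_inv _ h])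

private lemma matrix_rank_add_le {K : Type*} [Field K] {n : ℕ}
    (A B : Matrix (Fin n) (Fin n) K) : (A + B).rank ≤ A.rank + B.rank := by
  have hle : LinearMap.range (A + B).mulVecLin ≤
      LinearMap.range A.mulVecLin ⊔ LinearMap.range B.mulVecLin := by
    rintro x ⟨v, rfl⟩
    rw [Matrix.mulVecLin_add]
    exact Submodule.add_mem_sup ⟨v, rfl⟩ ⟨v, rfl⟩
  calc (A + B).rank ≤ Module.finrank K
        (LinearMap.range A.mulVecLin ⊔ LinearMap.range B.mulVecLin : Submodule K (Fin n → K)) :=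
        Submodule.finrank_mono hle
    _ ≤ A.rank + B.rank := Submodule.finrank_add_le_finrank_add_finrank _ _

/-- The Dirac bivector D = W − W N Δ⁻¹ Nᵀ W is antisymmetric and has rank n − m. -/
theorem dirac_bivector_antisymm_rank {K : Type*} [Field K] {n m : ℕ}
    (ω : Matrix (Fin n) (Fin n) K) (N : Matrix (Fin n) (Fin m) K)
    (hω : IsUnit ω) (hskew : ωᵀ = -ω)
    (W : Matrix (Fin n) (Fin n) K) (hW : W = ω⁻¹)
    (Δ : Matrix (Fin m) (Fin m) K) (hΔdef : Δ = Nᵀ * W * N) (hΔ : IsUnit Δ) :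
    (W - W * N * Δ⁻¹ * Nᵀ * W)ᵀ = -(W - W * N * Δ⁻¹ * Nᵀ * W) ∧
      (W - W * N * Δ⁻¹ * Nᵀ * W).rank = n - m := by
  have hWdet : IsUnit W.det := by
    rw [hW]
    exact Matrix.isUnit_nonsing_inv_det ω ((Matrix.isUnit_iff_isUnit_det ω).mp hω)
  have hΔdet : IsUnit Δ.det := (Matrix.isUnit_iff_isUnit_det Δ).mp hΔ
  have hΔinv : Δ⁻¹ * Δ = 1 := Matrix.nonsing_inv_mul Δ hΔdet
  -- Transpose facts
  have hWT : Wᵀ = -W := by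
    rw [hW, Matrix.transpose_nonsing_inv, hskew,
      matrix_neg_inv ω ((Matrix.isUnit_iff_isUnit_det ω).mp hω)]
  have hΔT : Δᵀ = -Δ := by
    rw [hΔdef]
    simp only [Matrix.transpose_mul, Matrix.transpose_transpose, hWT]
    simp [Matrix.mul_assoc]
  have hΔinvT : (Δ⁻¹)ᵀ = -Δ⁻¹ := by
    rw [Matrix.transpose_nonsing_inv, hΔT, matrix_neg_inv Δ hΔdet]
  -- Antisymmetry
  have hanti : (W - W * N * Δ⁻¹ * Nᵀ * W)ᵀ = -(W - W * N * Δ⁻¹ * Nᵀ * W) := by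
    simp only [Matrix.transpose_sub, hWT, Matrix.transpose_mul, Matrix.transpose_transpose,
      hΔinvT]
    simp only [Matrix.neg_mul, Matrix.mul_neg, neg_neg, neg_sub, sub_neg_eq_add]
    abel_nf
    simp [Matrix.mul_assoc]
  refine ⟨hanti, ?_⟩
  -- Rank
  set P : Matrix (Fin n) (Fin n) K := N * Δ⁻¹ * Nᵀ * W with hP
  have hfactor : W - W * N * Δ⁻¹ * Nᵀ * W = W * (1 - P) := by
    rw [Matrix.mul_sub, Matrix.mul_one, hP]
    simp [Matrix.mul_assoc]
  have hNΔ : Nᵀ * W * N = Δ := hΔdef.symm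
  have hPN : P * N = N := by
    rw [hP]
    have h1 : N * Δ⁻¹ * Nᵀ * W * N = N * (Δ⁻¹ * (Nᵀ * W * N)) := by
      simp [Matrix.mul_assoc]
    rw [h1, hNΔ, hΔinv, Matrix.mul_one]
  have hPidem : P * P = P := by
    have h1 : P * P = P * N * (Δ⁻¹ * (Nᵀ * W)) := by
      rw [hP]
      simp only [Matrix.mul_assoc]
    rw [h1, hPN, hP]
    simp only [Matrix.mul_assoc]
  -- rank N = m
  have hrankΔ : Δ.rank = m := by
    rw [Matrix.rank_of_isUnit Δ hΔ, Fintype.card_fin]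
  have hrankN_le : N.rank ≤ m := by
    simpa using N.rank_le_card_width
  have hrankN_ge : m ≤ N.rank := by
    calc m = Δ.rank := hrankΔ.symm
      _ ≤ N.rank := by
        rw [hΔdef]
        exact Matrix.rank_mul_le_right _ _
  have hrankN : N.rank = m := le_antisymm hrankN_le hrankN_ge
  -- rank P = m
  have hrankP_le : P.rank ≤ m := by
    have h1 : P = N * (Δ⁻¹ * (Nᵀ * W)) := by rw [hP]; simp [Matrix.mul_assoc]
    calc P.rank = (N * (Δ⁻¹ * (Nᵀ * W))).rank := by rw [h1]
      _ ≤ N.rank := Matrix.rank_mul_le_left _ _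
      _ = m := hrankN
  have hrankP_ge : m ≤ P.rank := by
    calc m = N.rank := hrankN.symm
      _ = (P * N).rank := by rw [hPN]
      _ ≤ P.rank := Matrix.rank_mul_le_left _ _
  have hrankP : P.rank = m := le_antisymm hrankP_le hrankP_ge
  -- rank (1 - P) = n - m
  have hmul0 : P * (1 - P) = 0 := by
    rw [Matrix.mul_sub, mul_one, hPidem, sub_self]
  have hsum_le : P.rank + (1 - P).rank ≤ n := by
    simpa using Matrix.rank_add_rank_le_card_of_mul_eq_zero hmul0
  have hsum_ge : n ≤ P.rank + (1 - P).rank := by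
    calc n = (1 : Matrix (Fin n) (Fin n) K).rank := by simp
      _ = (P + (1 - P)).rank := by rw [add_sub_cancel]
      _ ≤ P.rank + (1 - P).rank := matrix_rank_add_le _ _
  have hrank1P : (1 - P).rank = n - m := by omega
  rw [hfactor, Matrix.rank_mul_eq_right_of_isUnit_det W (1 - P) hWdet, hrank1P]
end

section
/- Let A, δ, δ* be as above. If B ∈ A satisfies δB = 0 and B|_{C=Y=0} = 0, then x := δ* B satisfies δ x = B. Moreover x is the unique solution of δ x = B satisfying δ* x = 0 and x|_{C=Y=0} = 0. -/
/-! The free graded-commutative algebra on `n` even generators `Y^A` and `n` odd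
generators `C^A` over `R`, realized as finitely supported functions on monomials:
a monomial is a pair `(k, s)` of a multi-exponent `k` for the `Y`'s and a subset
`s : Finset (Fin n)` recording the (increasingly ordered) product of `C`'s. -/
abbrev FreeSCA (n : ℕ) (R : Type*) [CommRing R] := ((Fin n →₀ ℕ) × Finset (Fin n)) →₀ R

variable {n : ℕ} {R : Type*} [CommRing R]

/-- Koszul sign of moving `C^A` past the generators of `s` smaller than `A`. -/
def koszulSign (s : Finset (Fin n)) (A : Fin n) : ℤ := (-1) ^ (s.filter (fun B => B < A)).card

/-- Total degree in the `Y` variables. -/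
def degY (k : Fin n →₀ ℕ) : ℕ := k.sum fun _ v => v

/-- The Koszul differential δ = Σ_A C^A ∂/∂Y^A. -/
noncomputable def delta (f : FreeSCA n R) : FreeSCA n R :=
  f.sum fun ks r => ∑ A : Fin n,
    if A ∈ ks.2 then 0 else
      Finsupp.single (ks.1 - Finsupp.single A 1, insert A ks.2)
        (((ks.1 A : ℤ) * koszulSign ks.2 A) • r)

/-- The contracting homotopy δ* = (1/(p+q)) Σ_A Y^A ∂/∂C^A on bidegree (p,q),
with δ* = 0 on bidegree (0,0). -/
noncomputable def deltaStar [Algebra ℚ R] (f : FreeSCA n R) : FreeSCA n R :=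
  f.sum fun ks r => ∑ A ∈ ks.2,
    Finsupp.single (ks.1 + Finsupp.single A 1, ks.2.erase A)
      (((((ks.2.card + degY ks.1 : ℕ) : ℚ)⁻¹ * (koszulSign ks.2 A : ℚ)) • r))

/-- Projection onto the component of bidegree (0,0), i.e. evaluation at C = Y = 0. -/
noncomputable def piZero (f : FreeSCA n R) : FreeSCA n R :=
  Finsupp.single (0, ∅) (f (0, ∅))

section Aux

open Finsupp

/-! ### Basic structure lemmas -/

lemma delta_zero : delta (0 : FreeSCA n R) = 0 := Finsupp.sum_zero_index

lemma delta_add (f g : FreeSCA n R) : delta (f + g) = delta f + delta g := by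
  unfold delta
  apply Finsupp.sum_add_index
  · intro ks _; simp
  · intro ks _ r1 r2
    rw [← Finset.sum_add_distrib]
    refine Finset.sum_congr rfl fun A _ => ?_
    split_ifs <;> simp [smul_add, Finsupp.single_add]

lemma deltaStar_zero [Algebra ℚ R] : deltaStar (0 : FreeSCA n R) = 0 := Finsupp.sum_zero_index

lemma deltaStar_add [Algebra ℚ R] (f g : FreeSCA n R) :
    deltaStar (f + g) = deltaStar f + deltaStar g := by
  unfold deltaStar
  apply Finsupp.sum_add_index
  · intro ks _; simp
  · intro ks _ r1 r2
    rw [← Finset.sum_add_distrib]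
    refine Finset.sum_congr rfl fun A _ => ?_
    simp [smul_add, Finsupp.single_add]

lemma piZero_add (f g : FreeSCA n R) : piZero (f + g) = piZero f + piZero g := by
  simp [piZero, Finsupp.single_add]

lemma delta_sum {ι : Type*} (t : Finset ι) (g : ι → FreeSCA n R) :
    delta (∑ i ∈ t, g i) = ∑ i ∈ t, delta (g i) := by
  classical
  induction t using Finset.induction_on with
  | empty => simp [delta_zero]
  | insert _ _ h ih => rw [Finset.sum_insert h, Finset.sum_insert h, delta_add, ih]

lemma deltaStar_sum [Algebra ℚ R] {ι : Type*} (t : Finset ι) (g : ι → FreeSCA n R) :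
    deltaStar (∑ i ∈ t, g i) = ∑ i ∈ t, deltaStar (g i) := by
  classical
  induction t using Finset.induction_on with
  | empty => simp [deltaStar_zero]
  | insert _ _ h ih => rw [Finset.sum_insert h, Finset.sum_insert h, deltaStar_add, ih]

lemma delta_single (k : Fin n →₀ ℕ) (s : Finset (Fin n)) (r : R) :
    delta (Finsupp.single (k, s) r) = ∑ A : Fin n,
      if A ∈ s then 0 else
        Finsupp.single (k - Finsupp.single A 1, insert A s)
          (((k A : ℤ) * koszulSign s A) • r) := by
  unfold delta
  rw [Finsupp.sum_single_index]
  simp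

lemma deltaStar_single [Algebra ℚ R] (k : Fin n →₀ ℕ) (s : Finset (Fin n)) (r : R) :
    deltaStar (Finsupp.single (k, s) r) = ∑ A ∈ s,
      Finsupp.single (k + Finsupp.single A 1, s.erase A)
        (((((s.card + degY k : ℕ) : ℚ)⁻¹ * (koszulSign s A : ℚ)) • r)) := by
  unfold deltaStar
  rw [Finsupp.sum_single_index]
  simp

lemma sum_ite_not_mem (t : Finset (Fin n)) (g : Fin n → FreeSCA n R) :
    (∑ B : Fin n, if B ∈ t then 0 else g B) = ∑ B ∈ tᶜ, g B := by
  rw [Finset.sum_ite, Finset.sum_const_zero, zero_add]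
  congr 1
  ext B
  simp

/-! ### Degree and sign lemmas -/

lemma degY_eq_sum (k : Fin n →₀ ℕ) : degY k = ∑ i, k i :=
  Finsupp.sum_fintype _ _ (fun _ => rfl)

lemma degY_sub_single {k : Fin n →₀ ℕ} {B : Fin n} (hk : 1 ≤ k B) :
    degY (k - Finsupp.single B 1) + 1 = degY k := by
  rw [degY_eq_sum, degY_eq_sum, ← Finset.add_sum_erase _ k (Finset.mem_univ B),
    ← Finset.add_sum_erase _ _ (Finset.mem_univ B)]
  have h1 : (k - Finsupp.single B 1 : Fin n →₀ ℕ) B = k B - 1 := by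
    simp [Finsupp.tsub_apply]
  have h2 : ∀ i ∈ Finset.univ.erase B, (k - Finsupp.single B 1 : Fin n →₀ ℕ) i = k i := by
    intro i hi
    simp [Finsupp.tsub_apply, Finsupp.single_apply_eq_zero,
      (Finset.mem_erase.mp hi).1.symm]
  rw [Finset.sum_congr rfl h2, h1]
  set S := ∑ i ∈ Finset.univ.erase B, k i with hS
  omega

lemma degY_eq_zero {k : Fin n →₀ ℕ} (h : degY k = 0) : k = 0 := by
  rw [degY_eq_sum] at h
  ext i
  exact (Finset.sum_eq_zero_iff.mp h) i (Finset.mem_univ i)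

lemma koszulSign_erase_self (s : Finset (Fin n)) (A : Fin n) :
    koszulSign (s.erase A) A = koszulSign s A := by
  unfold koszulSign
  congr 1
  rw [Finset.filter_erase, Finset.erase_eq_of_notMem]
  simp

lemma koszulSign_insert_self (s : Finset (Fin n)) (A : Fin n) :
    koszulSign (insert A s) A = koszulSign s A := by
  unfold koszulSign
  congr 1
  rw [Finset.filter_insert]
  simp

lemma koszulSign_sq (s : Finset (Fin n)) (A : Fin n) :
    koszulSign s A * koszulSign s A = 1 := by
  unfold koszulSign
  rw [← pow_add, ← two_mul, pow_mul]
  norm_num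

lemma koszulSign_erase {s : Finset (Fin n)} {A B : Fin n} (hA : A ∈ s) :
    koszulSign (s.erase A) B * (-1) ^ (if A < B then 1 else 0) = koszulSign s B := by
  unfold koszulSign
  rw [← pow_add, Finset.filter_erase]
  congr 1
  by_cases h : A < B
  · rw [Finset.card_erase_of_mem (by simp [hA, h]), if_pos h]
    have : 0 < (s.filter (fun C => C < B)).card :=
      Finset.card_pos.mpr ⟨A, by simp [hA, h]⟩
    omega
  · rw [Finset.erase_eq_of_notMem (by simp [h]), if_neg h, add_zero]

lemma koszulSign_insert {s : Finset (Fin n)} {A B : Fin n} (hB : B ∉ s) :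
    koszulSign (insert B s) A = koszulSign s A * (-1) ^ (if B < A then 1 else 0) := by
  unfold koszulSign
  rw [← pow_add, Finset.filter_insert]
  by_cases h : B < A
  · rw [if_pos h, if_pos h, Finset.card_insert_of_notMem (by simp [hB])]
  · rw [if_neg h, if_neg h, add_zero]

/-! ### Scalar and monomial manipulation -/

lemma zsmul_qsmul [Algebra ℚ R] (z : ℤ) (q : ℚ) (r : R) :
    z • (q • r) = ((z : ℚ) * q) • r := by
  rw [← Int.cast_smul_eq_zsmul ℚ z, smul_smul]

lemma qsmul_zsmul [Algebra ℚ R] (q : ℚ) (z : ℤ) (r : R) :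
    q • (z • r) = (q * (z : ℚ)) • r := by
  rw [← Int.cast_smul_eq_zsmul ℚ z, smul_smul]

lemma mono_swap {k : Fin n →₀ ℕ} {A B : Fin n} (h : A ≠ B) :
    k + Finsupp.single A 1 - Finsupp.single B 1
      = k - Finsupp.single B 1 + Finsupp.single A 1 := by
  ext i
  simp only [Finsupp.tsub_apply, Finsupp.add_apply, Finsupp.single_apply]
  split_ifs with h1 h2
  · exact absurd (h1.trans h2.symm) h
  all_goals omega

end Aux

section Core

lemma diag1 [Algebra ℚ R] {s : Finset (Fin n)} {A : Fin n} (hA : A ∈ s)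
    (k : Fin n →₀ ℕ) (r : R) :
    Finsupp.single (k + Finsupp.single A 1 - Finsupp.single A 1, insert A (s.erase A))
        ((((k + Finsupp.single A 1 : Fin n →₀ ℕ) A : ℤ) * koszulSign (s.erase A) A) •
          (((((s.card + degY k : ℕ) : ℚ)⁻¹ * (koszulSign s A : ℚ)) • r)))
      = Finsupp.single (k, s)
          ((((k A : ℚ) + 1) * ((s.card + degY k : ℕ) : ℚ)⁻¹) • r) := by
  rw [add_tsub_cancel_right, Finset.insert_erase hA, koszulSign_erase_self, zsmul_qsmul]
  congr 2
  have h1 : ((k + Finsupp.single A 1 : Fin n →₀ ℕ) A : ℤ) = (k A : ℤ) + 1 := by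
    simp
  have hsq : (koszulSign s A : ℚ) * (koszulSign s A : ℚ) = 1 := by
    exact_mod_cast koszulSign_sq s A
  rw [h1]
  push_cast
  linear_combination (((k A : ℚ) + 1) * ((s.card : ℚ) + (degY k : ℚ))⁻¹) * hsq

lemma diag2 [Algebra ℚ R] {s : Finset (Fin n)} {A : Fin n} (hA : A ∉ s)
    (k : Fin n →₀ ℕ) (r : R) :
    Finsupp.single (k - Finsupp.single A 1 + Finsupp.single A 1, (insert A s).erase A)
        (((((insert A s).card + degY (k - Finsupp.single A 1) : ℕ) : ℚ)⁻¹ *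
            (koszulSign (insert A s) A : ℚ)) • (((k A : ℤ) * koszulSign s A) • r))
      = Finsupp.single (k, s)
          (((k A : ℚ) * ((s.card + degY k : ℕ) : ℚ)⁻¹) • r) := by
  by_cases hk : k A = 0
  · simp [hk]
  · have h1 : 1 ≤ k A := Nat.one_le_iff_ne_zero.mpr hk
    have hm : k - Finsupp.single A 1 + Finsupp.single A 1 = k :=
      tsub_add_cancel_of_le (Finsupp.single_le_iff.mpr h1)
    have hdeg : degY (k - Finsupp.single A 1) + 1 = degY k := degY_sub_single h1
    have hcard : (insert A s).card = s.card + 1 := Finset.card_insert_of_notMem hA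
    have hNN : ((insert A s).card + degY (k - Finsupp.single A 1) : ℕ) = s.card + degY k := by
      omega
    rw [hm, Finset.erase_insert hA, koszulSign_insert_self, qsmul_zsmul, hNN]
    congr 2
    have hsq : (koszulSign s A : ℚ) * (koszulSign s A : ℚ) = 1 := by
      exact_mod_cast koszulSign_sq s A
    push_cast
    linear_combination ((k A : ℚ) * ((s.card : ℚ) + (degY k : ℚ))⁻¹) * hsq

lemma cross_cancel [Algebra ℚ R] {k : Fin n →₀ ℕ} {s : Finset (Fin n)} {A B : Fin n}
    (hA : A ∈ s) (hB : B ∉ s) (r : R) :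
    Finsupp.single (k + Finsupp.single A 1 - Finsupp.single B 1, insert B (s.erase A))
        (((k B : ℚ) * (koszulSign (s.erase A) B : ℚ) *
            (((s.card + degY k : ℕ) : ℚ)⁻¹ * (koszulSign s A : ℚ))) • r)
      + Finsupp.single (k - Finsupp.single B 1 + Finsupp.single A 1, insert B (s.erase A))
        ((((((insert B s).card + degY (k - Finsupp.single B 1) : ℕ) : ℚ)⁻¹ *
            (koszulSign (insert B s) A : ℚ)) * ((k B : ℚ) * (koszulSign s B : ℚ))) • r) = 0 := by
  have hAB : A ≠ B := fun h => hB (h ▸ hA)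
  rw [mono_swap hAB, ← Finsupp.single_add, ← add_smul]
  by_cases hk : k B = 0
  · rw [hk]
    push_cast
    norm_num
  · have h1 : 1 ≤ k B := Nat.one_le_iff_ne_zero.mpr hk
    have hdeg : degY (k - Finsupp.single B 1) + 1 = degY k := degY_sub_single h1
    have hcard : (insert B s).card = s.card + 1 := Finset.card_insert_of_notMem hB
    have hNN : ((insert B s).card + degY (k - Finsupp.single B 1) : ℕ) = s.card + degY k := by
      omega
    rw [hNN]
    have hE : (koszulSign (s.erase A) B : ℚ) * (-1) ^ (if A < B then 1 else 0)
        = (koszulSign s B : ℚ) := by exact_mod_cast koszulSign_erase hA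
    have hI : (koszulSign (insert B s) A : ℚ)
        = (koszulSign s A : ℚ) * (-1) ^ (if B < A then 1 else 0) := by
      exact_mod_cast koszulSign_insert hB
    have hc : (k B : ℚ) * (koszulSign (s.erase A) B : ℚ) *
            (((s.card + degY k : ℕ) : ℚ)⁻¹ * (koszulSign s A : ℚ))
        + ((((s.card + degY k : ℕ) : ℚ)⁻¹ * (koszulSign (insert B s) A : ℚ)) *
            ((k B : ℚ) * (koszulSign s B : ℚ))) = 0 := by
      rcases hAB.lt_or_gt with h | h
      · rw [if_pos h] at hE
        rw [if_neg (asymm h)] at hI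
        have hE' : (koszulSign (s.erase A) B : ℚ) = -(koszulSign s B : ℚ) := by
          rw [pow_one] at hE; linarith
        rw [hE', hI]
        ring
      · rw [if_neg (asymm h)] at hE
        rw [if_pos h] at hI
        have hE' : (koszulSign (s.erase A) B : ℚ) = (koszulSign s B : ℚ) := by
          rw [pow_zero, mul_one] at hE; exact hE
        rw [hE', hI]
        ring
    rw [hc, zero_smul, Finsupp.single_zero]

end Core

section Homotopy

lemma hT1 [Algebra ℚ R] (k : Fin n →₀ ℕ) (s : Finset (Fin n)) (r : R) :
    delta (deltaStar (Finsupp.single (k, s) r)) =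
      ∑ A ∈ s, (Finsupp.single (k, s)
          ((((k A : ℚ) + 1) * ((s.card + degY k : ℕ) : ℚ)⁻¹) • r)
        + ∑ B ∈ sᶜ, Finsupp.single
            (k + Finsupp.single A 1 - Finsupp.single B 1, insert B (s.erase A))
            (((k B : ℚ) * (koszulSign (s.erase A) B : ℚ) *
              (((s.card + degY k : ℕ) : ℚ)⁻¹ * (koszulSign s A : ℚ))) • r)) := by
  rw [deltaStar_single, delta_sum]
  refine Finset.sum_congr rfl fun A hA => ?_
  rw [delta_single, sum_ite_not_mem, Finset.compl_erase,
    Finset.sum_insert (by simp [hA]), diag1 hA]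
  congr 1
  refine Finset.sum_congr rfl fun B hB => ?_
  have hBA : B ≠ A := by
    intro h; rw [Finset.mem_compl] at hB; exact hB (h ▸ hA)
  rw [zsmul_qsmul]
  congr 2
  have h1 : ((k + Finsupp.single A 1 : Fin n →₀ ℕ) B : ℤ) = (k B : ℤ) := by
    simp [Finsupp.single_apply, hBA.symm]
  rw [h1]
  push_cast
  ring

lemma hT2 [Algebra ℚ R] (k : Fin n →₀ ℕ) (s : Finset (Fin n)) (r : R) :
    deltaStar (delta (Finsupp.single (k, s) r)) =
      ∑ A ∈ sᶜ, (Finsupp.single (k, s)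
          (((k A : ℚ) * ((s.card + degY k : ℕ) : ℚ)⁻¹) • r)
        + ∑ B ∈ s, Finsupp.single
            (k - Finsupp.single A 1 + Finsupp.single B 1, insert A (s.erase B))
            ((((((insert A s).card + degY (k - Finsupp.single A 1) : ℕ) : ℚ)⁻¹ *
                (koszulSign (insert A s) B : ℚ)) *
              ((k A : ℚ) * (koszulSign s A : ℚ))) • r)) := by
  rw [delta_single, sum_ite_not_mem, deltaStar_sum]
  refine Finset.sum_congr rfl fun A hA => ?_
  have hA' : A ∉ s := by simpa using hA
  rw [deltaStar_single, Finset.sum_insert hA', diag2 hA']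
  congr 1
  refine Finset.sum_congr rfl fun B hB => ?_
  have hBA : B ≠ A := fun h => hA' (h ▸ hB)
  rw [Finset.erase_insert_of_ne hBA.symm, qsmul_zsmul]
  congr 2
  push_cast
  ring

lemma homotopy_single [Algebra ℚ R] (k : Fin n →₀ ℕ) (s : Finset (Fin n)) (r : R) :
    delta (deltaStar (Finsupp.single (k, s) r))
      + deltaStar (delta (Finsupp.single (k, s) r))
      + piZero (Finsupp.single (k, s) r) = Finsupp.single (k, s) r := by
  by_cases h0 : s.card + degY k = 0
  · have hs : s = ∅ := Finset.card_eq_zero.mp (by omega)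
    have hk : k = 0 := degY_eq_zero (by omega)
    subst hs hk
    have hd : delta (Finsupp.single ((0 : Fin n →₀ ℕ), (∅ : Finset (Fin n))) r) = 0 := by
      rw [delta_single]; simp
    have hds : deltaStar (Finsupp.single ((0 : Fin n →₀ ℕ), (∅ : Finset (Fin n))) r) = 0 := by
      rw [deltaStar_single]; simp
    rw [hd, hds, delta_zero, deltaStar_zero, zero_add, zero_add]
    simp [piZero]
  · have hpi : piZero (Finsupp.single (k, s) r) = 0 := by
      have hne : (k, s) ≠ ((0 : Fin n →₀ ℕ), (∅ : Finset (Fin n))) := by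
        intro h
        rw [Prod.mk.injEq] at h
        apply h0
        rw [h.1, h.2]
        simp [degY]
      rw [piZero, Finsupp.single_eq_of_ne' hne, Finsupp.single_zero]
    have e1 : ∀ (t : Finset (Fin n)) (c : Fin n → ℚ),
        (∑ A ∈ t, Finsupp.single ((k, s)) (c A • r)) =
          Finsupp.single (k, s) ((∑ A ∈ t, c A) • r) := by
      intro t c
      classical
      induction t using Finset.induction_on with
      | empty => simp
      | insert _ _ h ih =>
          rw [Finset.sum_insert h, Finset.sum_insert h, ih, ← Finsupp.single_add, ← add_smul]
    have hNq : ((s.card + degY k : ℕ) : ℚ) ≠ 0 := Nat.cast_ne_zero.mpr h0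
    have hdiag :
        (∑ A ∈ s, Finsupp.single (k, s)
            ((((k A : ℚ) + 1) * ((s.card + degY k : ℕ) : ℚ)⁻¹) • r))
          + ∑ A ∈ sᶜ, Finsupp.single (k, s)
            (((k A : ℚ) * ((s.card + degY k : ℕ) : ℚ)⁻¹) • r)
          = Finsupp.single (k, s) r := by
      rw [e1, e1, ← Finsupp.single_add, ← add_smul]
      have hX : (∑ A ∈ s, ((k A : ℚ) + 1)) + ∑ A ∈ sᶜ, (k A : ℚ)
          = ((s.card + degY k : ℕ) : ℚ) := by
        rw [Finset.sum_add_distrib, Finset.sum_const, nsmul_eq_mul, mul_one]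
        have hsc := Finset.sum_add_sum_compl s (fun A => (k A : ℚ))
        push_cast [degY_eq_sum]
        linarith [hsc]
      have hsum : (∑ A ∈ s, (((k A : ℚ) + 1) * ((s.card + degY k : ℕ) : ℚ)⁻¹))
          + ∑ A ∈ sᶜ, ((k A : ℚ) * ((s.card + degY k : ℕ) : ℚ)⁻¹) = 1 := by
        rw [← Finset.sum_mul, ← Finset.sum_mul, ← add_mul, hX, mul_inv_cancel₀ hNq]
      rw [hsum, one_smul]
    have hcross :
        (∑ A ∈ s, ∑ B ∈ sᶜ, Finsupp.single
            (k + Finsupp.single A 1 - Finsupp.single B 1, insert B (s.erase A))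
            (((k B : ℚ) * (koszulSign (s.erase A) B : ℚ) *
              (((s.card + degY k : ℕ) : ℚ)⁻¹ * (koszulSign s A : ℚ))) • r))
          + ∑ A ∈ sᶜ, ∑ B ∈ s, Finsupp.single
            (k - Finsupp.single A 1 + Finsupp.single B 1, insert A (s.erase B))
            ((((((insert A s).card + degY (k - Finsupp.single A 1) : ℕ) : ℚ)⁻¹ *
                (koszulSign (insert A s) B : ℚ)) *
              ((k A : ℚ) * (koszulSign s A : ℚ))) • r)
          = 0 := by
      rw [Finset.sum_comm (s := sᶜ) (t := s), ← Finset.sum_add_distrib]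
      refine Finset.sum_eq_zero fun A hA => ?_
      rw [← Finset.sum_add_distrib]
      refine Finset.sum_eq_zero fun B hB => ?_
      exact cross_cancel hA (Finset.mem_compl.mp hB) r
    rw [hT1, hT2, hpi, add_zero, Finset.sum_add_distrib, Finset.sum_add_distrib,
      add_add_add_comm, hdiag, hcross, add_zero]

lemma homotopy [Algebra ℚ R] (f : FreeSCA n R) :
    delta (deltaStar f) + deltaStar (delta f) + piZero f = f := by
  induction f using Finsupp.induction with
  | zero => simp [delta_zero, deltaStar_zero, piZero]
  | single_add ks r f _ _ ih =>
    obtain ⟨k, s⟩ := ks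
    rw [delta_add, deltaStar_add, delta_add, deltaStar_add, piZero_add]
    have h1 := homotopy_single (R := R) k s r
    calc delta (deltaStar (Finsupp.single (k, s) r)) + delta (deltaStar f)
          + (deltaStar (delta (Finsupp.single (k, s) r)) + deltaStar (delta f))
          + (piZero (Finsupp.single (k, s) r) + piZero f)
        = (delta (deltaStar (Finsupp.single (k, s) r))
            + deltaStar (delta (Finsupp.single (k, s) r))
            + piZero (Finsupp.single (k, s) r))
          + (delta (deltaStar f) + deltaStar (delta f) + piZero f) := by abel
      _ = Finsupp.single (k, s) r + f := by rw [h1, ih]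

end Homotopy

/-- If δB = 0 and B has vanishing (0,0)-component, then x := δ*B solves δx = B,
and it is the unique solution with δ*x = 0 and vanishing (0,0)-component. -/
theorem delta_equation_solution [Algebra ℚ R] (B : FreeSCA n R)
    (hB : delta B = 0) (hB0 : B (0, ∅) = 0) :
    delta (deltaStar B) = B ∧
      ∀ x : FreeSCA n R, delta x = B → deltaStar x = 0 → x (0, ∅) = 0 →
        x = deltaStar B := by
  have hpiB : piZero B = 0 := by
    rw [piZero, hB0, Finsupp.single_zero]
  have h1 := homotopy B
  rw [hB, deltaStar_zero, hpiB, add_zero, add_zero] at h1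
  refine ⟨h1, fun x hx hx2 hx0 => ?_⟩
  have h2 := homotopy x
  have hpix : piZero x = 0 := by
    rw [piZero, hx0, Finsupp.single_zero]
  rw [hx2, delta_zero, hx, hpix, zero_add, add_zero] at h2
  exact h2.symm
end
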